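/- Let (X, (f_n)) be a complex situation in which X is zero-dimensional and all domains D_n are clopen, let V be a nonempty open subset of X, and let m ∈ ℕ. Then there exist n > m and nonempty clopen sets V_0, V_1 ⊆ X with V_0 ⊆ V ∩ D_n and V_1 ⊆ V ∩ f_n[V_0]. -/
import Mathlib
open Filter Topology

/-- The graph of a partial continuous map with clopen domain is closed. -/
lemma graph_closed_aux {X : Type*} [TopologicalSpace X] [T2Space X]
    (D : Set X) (f : X → X) (hD : IsClopen D) (hcont : ContinuousOn f D) :
    IsClosed {p : X × X | p.1 ∈ D ∧ p.2 = f p.1} := by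
  set S := {p : X × X | p.1 ∈ D ∧ p.2 = f p.1} with hS
  refine isClosed_iff_clusterPt.mpr fun p hp => ?_
  set F := 𝓝 p ⊓ 𝓟 S with hF
  haveI : F.NeBot := hp
  have hevS : ∀ᶠ q : X × X in F, q ∈ S := mem_inf_of_right (mem_principal_self _)
  have h1 : Tendsto (fun q : X × X => q.1) F (𝓝 p.1) :=
    (continuous_fst.tendsto p).mono_left inf_le_left
  have hmemD : p.1 ∈ D :=
    hD.isClosed.mem_of_tendsto h1 (by filter_upwards [hevS] with q hq using hq.1)
  have hca : ContinuousAt f p.1 := hcont.continuousAt (hD.isOpen.mem_nhds hmemD)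
  have h2 : Tendsto (fun q : X × X => f q.1) F (𝓝 (f p.1)) := hca.tendsto.comp h1
  have h3 : Tendsto (fun q : X × X => q.2) F (𝓝 p.2) :=
    (continuous_snd.tendsto p).mono_left inf_le_left
  have hev : ∀ᶠ q : X × X in F, q.2 = f q.1 := by
    filter_upwards [hevS] with q hq using hq.2
  exact ⟨hmemD, tendsto_nhds_unique_of_eventuallyEq h3 h2 hev⟩

/-- in a complex situation with `X` zero-dimensional and all
domains clopen, for every nonempty open `V ⊆ X` and every `m` there are
`n > m` and nonempty clopen `V_0 ⊆ V ∩ D_n`, `V_1 ⊆ V ∩ f_n[V_0]`. -/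
theorem stmt17 {X : Type*} [TopologicalSpace X] [PolishSpace X] [Nonempty X]
    (hzero : ∀ (x : X) (U : Set X), IsOpen U → x ∈ U →
      ∃ C : Set X, IsClopen C ∧ x ∈ C ∧ C ⊆ U)
    (D : ℕ → Set X) (f : ℕ → X → X)
    (hD : ∀ n, IsClopen (D n))
    (hrange : ∀ n, IsOpen (f n '' D n))
    (hcont : ∀ n, ContinuousOn (f n) (D n))
    (hopen : ∀ n, ∀ U : Set X, IsOpen U → IsOpen (f n '' (U ∩ D n)))
    (hdiag : ∀ x : X,
      (x, x) ∈ closure (⋃ n, {p : X × X | p.1 ∈ D n ∧ p.2 = f n p.1}) ∧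
      (x, x) ∉ ⋃ n, {p : X × X | p.1 ∈ D n ∧ p.2 = f n p.1})
    (V : Set X) (hV : IsOpen V) (hVne : V.Nonempty) (m : ℕ) :
    ∃ n > m, ∃ V0 V1 : Set X, IsClopen V0 ∧ IsClopen V1 ∧
      V0.Nonempty ∧ V1.Nonempty ∧ V0 ⊆ V ∩ D n ∧ V1 ⊆ V ∩ f n '' V0 := by
  obtain ⟨x, hxV⟩ := hVne
  set G : ℕ → Set (X × X) := fun n => {p : X × X | p.1 ∈ D n ∧ p.2 = f n p.1}
  have hGclosed : ∀ n, IsClosed (G n) := fun n =>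
    graph_closed_aux (D n) (f n) (hD n) (hcont n)
  -- the union splits
  have hsplit : (⋃ n, G n) = (⋃ n ∈ Finset.range (m + 1), G n) ∪ ⋃ n, G (n + m + 1) := by
    ext p
    simp only [Set.mem_iUnion, Set.mem_union, Finset.mem_range]
    constructor
    · rintro ⟨n, hn⟩
      rcases lt_or_ge n (m + 1) with h | h
      · exact Or.inl ⟨n, h, hn⟩
      · refine Or.inr ⟨n - (m + 1), ?_⟩
        have : n - (m + 1) + m + 1 = n := by omega
        rwa [this]
    · rintro (⟨n, _, hn⟩ | ⟨n, hn⟩)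
      · exact ⟨n, hn⟩
      · exact ⟨n + m + 1, hn⟩
  have hxG := hdiag x
  have hxcl : (x, x) ∈ closure (⋃ n, G (n + m + 1)) := by
    have hfin : IsClosed (⋃ n ∈ Finset.range (m + 1), G n) :=
      isClosed_biUnion_finset (fun n _ => hGclosed n)
    have h1 := hxG.1
    rw [hsplit, closure_union, hfin.closure_eq] at h1
    rcases h1 with h1 | h1
    · exact absurd (by
        obtain ⟨n, hn⟩ := Set.mem_iUnion₂.mp h1
        exact Set.mem_iUnion.mpr ⟨n, hn.2⟩) hxG.2
    · exact h1
  -- clopen nbhd of x inside V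
  obtain ⟨W, hWclopen, hxW, hWV⟩ := hzero x V hV hxV
  have hWW : IsOpen (W ×ˢ W) := hWclopen.isOpen.prod hWclopen.isOpen
  obtain ⟨p, hpWW, hpG⟩ := mem_closure_iff.mp hxcl (W ×ˢ W) hWW ⟨hxW, hxW⟩
  obtain ⟨k, hk⟩ := Set.mem_iUnion.mp hpG
  set n := k + m + 1
  have hnm : n > m := by omega
  obtain ⟨hpD, hpf⟩ := hk
  -- p.1 ∈ W ∩ D n, p.2 = f n p.1 ∈ W
  obtain ⟨C0, hC0clopen, hpC0, hC0sub⟩ := hzero p.1 (W ∩ D n)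
    (hWclopen.isOpen.inter (hD n).isOpen) ⟨hpWW.1, hpD⟩
  have himg : IsOpen (f n '' C0) := by
    have h := hopen n C0 hC0clopen.isOpen
    have : C0 ∩ D n = C0 := Set.inter_eq_left.mpr fun y hy => (hC0sub hy).2
    rwa [this] at h
  have hfp : f n p.1 ∈ W ∩ f n '' C0 := by
    refine ⟨hpf ▸ hpWW.2, ⟨p.1, hpC0, rfl⟩⟩
  obtain ⟨C1, hC1clopen, hfpC1, hC1sub⟩ := hzero (f n p.1) (W ∩ f n '' C0)
    (hWclopen.isOpen.inter himg) hfp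
  refine ⟨n, hnm, C0, C1, hC0clopen, hC1clopen, ⟨p.1, hpC0⟩, ⟨f n p.1, hfpC1⟩,
    fun y hy => ⟨hWV (hC0sub hy).1, (hC0sub hy).2⟩,
    fun y hy => ⟨hWV (hC1sub hy).1, (hC1sub hy).2⟩⟩
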